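/- Every real stable homogeneous polynomial has all its nonzero coefficients of the same sign; in particular, if it has at least one positive coefficient then all its coefficients are nonnegative. -/

import Mathlib

open MvPolynomial

/-- A real polynomial in `n` variables is real stable if (viewed over `ℂ`) it does not
vanish whenever all variables have positive imaginary part. -/
def RealStable {n : ℕ} (f : MvPolynomial (Fin n) ℝ) : Prop :=
  ∀ z : Fin n → ℂ, (∀ k, 0 < (z k).im) →
    MvPolynomial.eval z (f.map (algebraMap ℝ ℂ)) ≠ 0

namespace Stmt16Aux

/-- For a homogeneous polynomial, every monomial in the support has total degree `d`. -/
lemma degree_coeff {R : Type*} [CommSemiring R] {n d : ℕ} {F : MvPolynomial (Fin n) R}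
    (hF : F.IsHomogeneous d) {α : Fin n →₀ ℕ} (hα : F.coeff α ≠ 0) : ∑ i, α i = d := by
  have h1 : α.degree = d := by
    by_contra h
    exact hα (hF.coeff_eq_zero h)
  rw [← h1, Finsupp.degree]
  exact (Finset.sum_subset (Finset.subset_univ _) (by
    intro x _ hx
    simpa using (Finsupp.notMem_support_iff.mp hx))).symm

/-- Scaling law for homogeneous polynomials. -/
lemma eval_scale {n d : ℕ} {F : MvPolynomial (Fin n) ℂ} (hF : F.IsHomogeneous d)
    (c : ℂ) (x : Fin n → ℂ) :
    eval (fun k => c * x k) F = c ^ d * eval x F := by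
  rw [eval_eq', eval_eq', Finset.mul_sum]
  apply Finset.sum_congr rfl
  intro α hα
  have hcoef : F.coeff α ≠ 0 := mem_support_iff.mp hα
  have hdeg := degree_coeff hF hcoef
  rw [show (∏ i, (c * x i) ^ α i) = (∏ i, c ^ α i) * ∏ i, (x i) ^ α i by
    rw [← Finset.prod_mul_distrib]; exact Finset.prod_congr rfl fun i _ => mul_pow _ _ _]
  rw [Finset.prod_pow_eq_pow_sum, hdeg]
  ring

lemma eval_map_real {n : ℕ} (f : MvPolynomial (Fin n) ℝ) (v : Fin n → ℝ) :
    eval (fun k => ((v k : ℝ) : ℂ)) (f.map (algebraMap ℝ ℂ)) = ((eval v f : ℝ) : ℂ) := by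
  rw [eval_map]
  have := eval₂_comp_left (algebraMap ℝ ℂ) (RingHom.id ℝ) v f
  simpa [Function.comp_def] using this.symm

/-- A real stable homogeneous polynomial does not vanish on the positive orthant. -/
lemma pos_orthant_ne_zero {n d : ℕ} {f : MvPolynomial (Fin n) ℝ}
    (hhom : f.IsHomogeneous d) (hstab : RealStable f)
    {v : Fin n → ℝ} (hv : ∀ k, 0 < v k) : eval v f ≠ 0 := by
  have hFC : (f.map (algebraMap ℝ ℂ)).IsHomogeneous d := hhom.map _
  have h1 : eval (fun k => Complex.I * (v k : ℂ)) (f.map (algebraMap ℝ ℂ)) ≠ 0 := by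
    apply hstab
    intro k
    simp [hv k]
  rw [eval_scale hFC Complex.I] at h1
  intro h
  apply h1
  rw [eval_map_real, h]
  simp

/-- Key computation for the Gauss–Lucas argument: the logarithmic derivative at `0` of a
product of linear factors whose roots all have negative imaginary part. -/
lemma multiset_ratio (s : Multiset ℂ) (hs : ∀ r ∈ s, r.im < 0) :
    (s.map (fun r => Polynomial.X - Polynomial.C r)).prod.eval 0 ≠ 0 ∧
    ((Polynomial.derivative (s.map (fun r => Polynomial.X - Polynomial.C r)).prod).eval 0 /
      (s.map (fun r => Polynomial.X - Polynomial.C r)).prod.eval 0).im ≤ 0 ∧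
    (s ≠ 0 → ((Polynomial.derivative (s.map (fun r => Polynomial.X - Polynomial.C r)).prod).eval 0 /
      (s.map (fun r => Polynomial.X - Polynomial.C r)).prod.eval 0).im < 0) := by
  induction s using Multiset.induction_on with
  | empty => simp
  | cons a s ih =>
    have ha : a.im < 0 := hs a (Multiset.mem_cons_self a s)
    obtain ⟨h0, hle, _⟩ := ih (fun r hr => hs r (Multiset.mem_cons_of_mem hr))
    set P := (s.map (fun r => Polynomial.X - Polynomial.C r)).prod with hP
    have hane : a ≠ 0 := by
      intro h; rw [h] at ha; simp at ha
    have hprodcons : ((a ::ₘ s).map (fun r => Polynomial.X - Polynomial.C r)).prod = (Polynomial.X - Polynomial.C a) * P := by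
      rw [Multiset.map_cons, Multiset.prod_cons]
    have heval : ((a ::ₘ s).map (fun r => Polynomial.X - Polynomial.C r)).prod.eval 0 = (-a) * P.eval 0 := by
      rw [hprodcons]; simp
    have hne : (-a) * P.eval 0 ≠ 0 := mul_ne_zero (by simpa using hane) h0
    have hderiv : (Polynomial.derivative ((a ::ₘ s).map (fun r => Polynomial.X - Polynomial.C r)).prod).eval 0
        = P.eval 0 + (-a) * (Polynomial.derivative P).eval 0 := by
      rw [hprodcons, Polynomial.derivative_mul]
      simp
    have hratio : (Polynomial.derivative ((a ::ₘ s).map (fun r => Polynomial.X - Polynomial.C r)).prod).eval 0 /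
        ((a ::ₘ s).map (fun r => Polynomial.X - Polynomial.C r)).prod.eval 0
        = (-a)⁻¹ + (Polynomial.derivative P).eval 0 / P.eval 0 := by
      rw [hderiv, heval, inv_eq_one_div,
        div_add_div _ _ (neg_ne_zero.mpr hane) h0, one_mul]
    have hima : ((-a)⁻¹).im < 0 := by
      rw [Complex.inv_im]
      apply div_neg_of_neg_of_pos
      · simpa using ha
      · simpa using Complex.normSq_pos.mpr (neg_ne_zero.mpr hane)
    refine ⟨by rw [heval]; exact hne, ?_, fun _ => ?_⟩ <;>
    · rw [hratio, Complex.add_im]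
      linarith

/-- Gauss–Lucas-type lemma: if every root of `p` has negative imaginary part and `p` is
nonconstant, then `p'(0) ≠ 0`. -/
lemma gauss_lucas {p : Polynomial ℂ} (hdeg : 0 < p.natDegree)
    (hroots : ∀ r : ℂ, p.IsRoot r → r.im < 0) :
    (Polynomial.derivative p).eval 0 ≠ 0 := by
  have hp : p ≠ 0 := fun h => by simp [h] at hdeg
  have hcard : Multiset.card p.roots = p.natDegree :=
    (Polynomial.splits_iff_card_roots).mp (IsAlgClosed.splits p)
  have hfact := Polynomial.C_leadingCoeff_mul_prod_multiset_X_sub_C hcard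
  set P := (p.roots.map (fun r => Polynomial.X - Polynomial.C r)).prod with hPdef
  obtain ⟨h0, _, hlt⟩ := multiset_ratio p.roots
    (fun r hr => hroots r (Polynomial.isRoot_of_mem_roots hr))
  have hsne : p.roots ≠ 0 := by
    intro h
    rw [h] at hcard
    simp at hcard
    omega
  have hlt' := hlt hsne
  have hdP : (Polynomial.derivative P).eval 0 ≠ 0 := by
    intro h
    rw [h] at hlt'
    simp at hlt'
  have hlc : p.leadingCoeff ≠ 0 := Polynomial.leadingCoeff_ne_zero.mpr hp
  have hder : Polynomial.derivative p = Polynomial.C p.leadingCoeff * Polynomial.derivative P := by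
    conv_lhs => rw [← hfact]
    rw [Polynomial.derivative_C_mul]
  rw [hder]
  simp only [Polynomial.eval_mul, Polynomial.eval_C]
  exact mul_ne_zero hlc hdP

lemma aeval_eq_eval' {n : ℕ} (x : Fin n → ℂ) (F : MvPolynomial (Fin n) ℂ) :
    MvPolynomial.aeval x F = eval x F := by
  rw [← MvPolynomial.coe_aeval_eq_eval]
  rfl

lemma aeval_eval {n : ℕ} (g : Fin n → Polynomial ℂ) (F : MvPolynomial (Fin n) ℂ) (w : ℂ) :
    (MvPolynomial.aeval g F).eval w = eval (fun k => (g k).eval w) F := by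
  have h := comp_aeval_apply (f := g) (Polynomial.aeval w : Polynomial ℂ →ₐ[ℂ] ℂ) F
  simp only [Polynomial.coe_aeval_eq_eval] at h
  rw [h, aeval_eq_eval']

/-- Chain rule for substituting univariate polynomials into a multivariate polynomial. -/
lemma derivative_aeval {n : ℕ} (g : Fin n → Polynomial ℂ) (F : MvPolynomial (Fin n) ℂ) :
    Polynomial.derivative (MvPolynomial.aeval g F)
      = ∑ j, MvPolynomial.aeval g (pderiv j F) * Polynomial.derivative (g j) := by
  induction F using MvPolynomial.induction_on with
  | C a => simp
  | add p q hp hq => simp [map_add, hp, hq, add_mul, Finset.sum_add_distrib]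
  | mul_X p i hp =>
    have hterm : ∀ j : Fin n, MvPolynomial.aeval g (pderiv j (p * X i)) * Polynomial.derivative (g j)
        = MvPolynomial.aeval g (pderiv j p) * Polynomial.derivative (g j) * g i
          + (if j = i then MvPolynomial.aeval g p * Polynomial.derivative (g j) else 0) := by
      intro j
      rcases eq_or_ne j i with h | h
      · subst h
        simp only [pderiv_mul, pderiv_X_self, mul_one, map_add, map_mul, aeval_X, if_true]
        ring
      · simp only [pderiv_mul, pderiv_X_of_ne (Ne.symm h), mul_zero, add_zero, map_mul, aeval_X,
          if_neg h, add_zero]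
        ring
    rw [Finset.sum_congr rfl (fun j _ => hterm j), Finset.sum_add_distrib,
      Finset.sum_ite_eq' Finset.univ i
        (fun j => MvPolynomial.aeval g p * Polynomial.derivative (g j)),
      if_pos (Finset.mem_univ i), map_mul, aeval_X, Polynomial.derivative_mul, hp,
      Finset.sum_mul]

/-- The top coefficient of the univariate restriction of a homogeneous polynomial along the
direction `c` based at `z` is the evaluation at `c`. -/
lemma coeff_top {n d : ℕ} {F : MvPolynomial (Fin n) ℂ} (hF : F.IsHomogeneous d)
    (z c : Fin n → ℂ) (hc : ∀ k, c k ≠ 0) :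
    (MvPolynomial.aeval (fun k => Polynomial.C (c k) * Polynomial.X + Polynomial.C (z k)) F).coeff d
      = eval c F := by
  set g : Fin n → Polynomial ℂ := fun k => Polynomial.C (c k) * Polynomial.X + Polynomial.C (z k)
    with hg
  have hgne : ∀ k, (g k) ≠ 0 := by
    intro k h
    apply hc k
    have := congrArg Polynomial.leadingCoeff h
    rwa [hg, Polynomial.leadingCoeff_linear (hc k), Polynomial.leadingCoeff_zero] at this
  have hP : ∀ α : Fin n →₀ ℕ, F.coeff α ≠ 0 →
      (∏ i, (g i) ^ (α i)).coeff d = ∏ i, (c i) ^ (α i) := by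
    intro α hα
    have hdeg : (∏ i, (g i) ^ (α i)).natDegree = d := by
      rw [Polynomial.natDegree_prod _ _ (fun i _ => pow_ne_zero _ (hgne i))]
      calc (∑ i, ((g i) ^ (α i)).natDegree) = ∑ i, α i := by
            apply Finset.sum_congr rfl
            intro i _
            rw [Polynomial.natDegree_pow, Polynomial.natDegree_linear (hc i), mul_one]
        _ = d := degree_coeff hF hα
    rw [← hdeg, Polynomial.coeff_natDegree, Polynomial.leadingCoeff_prod]
    apply Finset.prod_congr rfl
    intro i _
    rw [Polynomial.leadingCoeff_pow, Polynomial.leadingCoeff_linear (hc i)]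
  rw [aeval_def, eval₂_eq', eval_eq', Polynomial.finset_sum_coeff]
  apply Finset.sum_congr rfl
  intro α hα
  have hcoef : F.coeff α ≠ 0 := mem_support_iff.mp hα
  have : (algebraMap ℂ (Polynomial ℂ)) (F.coeff α) = Polynomial.C (F.coeff α) := rfl
  rw [this, Polynomial.coeff_C_mul, hP α hcoef]

/-- Coefficient formula for partial derivatives. -/
lemma coeff_pderiv {n : ℕ} (f : MvPolynomial (Fin n) ℝ) (j : Fin n) (β : Fin n →₀ ℕ) :
    coeff β (pderiv j f) = ((β j : ℝ) + 1) * coeff (β + Finsupp.single j 1) f := by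
  induction f using MvPolynomial.induction_on' with
  | add p q hp hq => simp [map_add, hp, hq]; ring
  | monomial s a =>
    rw [pderiv_monomial]
    rcases eq_or_ne s (β + Finsupp.single j 1) with h | h
    · subst h
      have h1 : (β + Finsupp.single j 1) - Finsupp.single j 1 = β := by
        ext i; simp [Finsupp.single_apply]
      have h2 : ((β + Finsupp.single j 1 : Fin n →₀ ℕ)) j = β j + 1 := by
        simp
      rw [coeff_monomial, coeff_monomial, if_pos h1, if_pos rfl, h2]
      push_cast
      ring
    · rw [coeff_monomial, coeff_monomial, if_neg h]
      rcases Nat.eq_zero_or_pos (s j) with hz | hpos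
      · rcases eq_or_ne (s - Finsupp.single j 1) β with he | he
        · rw [if_pos he, hz]
          simp
        · rw [if_neg he]
          simp
      · have hle : Finsupp.single j 1 ≤ s := by
          rw [Finsupp.single_le_iff]
          omega
        have hrec : s - Finsupp.single j 1 + Finsupp.single j 1 = s :=
          tsub_add_cancel_of_le hle
        have : s - Finsupp.single j 1 ≠ β := by
          intro he
          apply h
          rw [← hrec, he]
        rw [if_neg this]
        simp

lemma pderiv_homogeneous {n d : ℕ} {f : MvPolynomial (Fin n) ℝ}
    (hhom : f.IsHomogeneous (d + 1)) (j : Fin n) : (pderiv j f).IsHomogeneous d := by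
  intro β hβ
  rw [coeff_pderiv] at hβ
  have h2 : coeff (β + Finsupp.single j 1) f ≠ 0 := right_ne_zero_of_mul hβ
  have h3 := hhom h2
  rw [map_add] at h3
  have h4 : (Finsupp.weight 1) (Finsupp.single j 1) = 1 := by
    simp [Finsupp.weight_apply, Finsupp.sum_single_index]
  rw [h4] at h3
  omega

/-- The key analytic step: a positive directional derivative of a real stable homogeneous
polynomial is again real stable. -/
lemma dirderiv_stable {n d : ℕ} {f : MvPolynomial (Fin n) ℝ}
    (hhom : f.IsHomogeneous (d + 1)) (hstab : RealStable f)
    {v : Fin n → ℝ} (hv : ∀ k, 0 < v k) :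
    RealStable (∑ j, C (v j) * pderiv j f) := by
  intro z hz
  set F : MvPolynomial (Fin n) ℂ := f.map (algebraMap ℝ ℂ) with hF
  have hFhom : F.IsHomogeneous (d + 1) := hhom.map _
  set G : Fin n → Polynomial ℂ :=
    fun k => Polynomial.C ((v k : ℂ)) * Polynomial.X + Polynomial.C (z k) with hG
  set q : Polynomial ℂ := MvPolynomial.aeval G F with hq
  have ha : eval z ((∑ j, C (v j) * pderiv j f).map (algebraMap ℝ ℂ))
      = ∑ j, ((v j : ℂ)) * eval z (pderiv j F) := by
    rw [map_sum (MvPolynomial.map (algebraMap ℝ ℂ)), map_sum (eval z)]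
    apply Finset.sum_congr rfl
    intro j _
    rw [map_mul, MvPolynomial.map_C, pderiv_map, eval_mul, eval_C]
    norm_num
  have hb : (Polynomial.derivative q).eval 0 = ∑ j, eval z (pderiv j F) * ((v j : ℂ)) := by
    rw [hq, derivative_aeval]
    rw [Polynomial.eval_finset_sum]
    apply Finset.sum_congr rfl
    intro j _
    have h1 : Polynomial.derivative (G j) = Polynomial.C ((v j : ℂ)) := by
      simp [hG]
    rw [Polynomial.eval_mul, h1, Polynomial.eval_C, aeval_eval]
    have h2 : (fun k => (G k).eval 0) = z := by
      funext k
      simp [hG]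
    rw [h2]
  have hc : 0 < q.natDegree := by
    have h1 : q.coeff (d+1) ≠ 0 := by
      rw [hq, hG, coeff_top hFhom z (fun k => ((v k : ℝ) : ℂ))
        (fun k => by simpa using (hv k).ne')]
      rw [hF, eval_map_real]
      exact_mod_cast pos_orthant_ne_zero hhom hstab hv
    have := Polynomial.le_natDegree_of_ne_zero h1
    omega
  have hd : ∀ r : ℂ, q.IsRoot r → r.im < 0 := by
    intro r hr
    have h1 : eval (fun k => (G k).eval r) F = 0 := by
      rw [← aeval_eval, ← hq]; exact hr
    have h2 : ¬ (∀ k, 0 < ((G k).eval r).im) := by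
      intro h
      exact hstab _ h h1
    push_neg at h2
    obtain ⟨k, hk⟩ := h2
    have h3 : ((G k).eval r).im = v k * r.im + (z k).im := by
      simp [hG, Complex.add_im, Complex.mul_im]
    rw [h3] at hk
    nlinarith [hz k, hv k]
  have hne := gauss_lucas hc hd
  rw [hb] at hne
  rw [ha]
  intro h
  apply hne
  rw [← h]
  apply Finset.sum_congr rfl
  intro j _
  ring

/-- Transfer of signs: if `x*y ≥ 0` and `x*w > 0` then `w*y ≥ 0`. -/
lemma sign_transfer {x y w : ℝ} (h1 : 0 ≤ x * y) (h2 : 0 < x * w) : 0 ≤ w * y := by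
  rcases lt_trichotomy x 0 with hx | hx | hx
  · have hw : w < 0 := by nlinarith
    have hy : y ≤ 0 := by nlinarith
    nlinarith
  · rw [hx] at h2; simp at h2
  · have hw : 0 < w := by nlinarith
    have hy : 0 ≤ y := by nlinarith
    nlinarith

/-- Main induction: every coefficient of a real stable homogeneous polynomial has the same
sign as the (nonzero) value at the all-ones point. -/
lemma key : ∀ (d n : ℕ) (f : MvPolynomial (Fin n) ℝ), f.IsHomogeneous d → RealStable f →
    ∀ α, 0 ≤ eval (fun _ => (1:ℝ)) f * coeff α f := by
  intro d
  induction d with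
  | zero =>
    intro n f hhom hstab α
    have heval : eval (fun _ => (1:ℝ)) f = coeff 0 f := by
      rw [eval_eq']
      have h1 : (∑ β ∈ f.support, coeff β f * ∏ i, (1:ℝ) ^ β i)
          = ∑ β ∈ f.support, coeff β f := by
        apply Finset.sum_congr rfl
        intro β _
        simp
      rw [h1]
      have hsub : f.support ⊆ {0} := by
        intro β hβ
        have := degree_coeff hhom (mem_support_iff.mp hβ)
        simp only [Finset.mem_singleton]
        ext i
        have : ∀ i, β i = 0 := by
          intro i
          have hle : β i ≤ ∑ i, β i := Finset.single_le_sum (fun _ _ => Nat.zero_le _)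
            (Finset.mem_univ i)
          omega
        simp [this]
      rw [Finset.sum_subset hsub (by
        intro x _ hx
        rwa [mem_support_iff, not_not] at hx)]
      simp
    rcases eq_or_ne α 0 with h | h
    · rw [h, heval]
      exact mul_self_nonneg _
    · have : coeff α f = 0 := by
        apply hhom.coeff_eq_zero
        intro hdeg
        exact h ((Finsupp.degree_eq_zero_iff α).mp hdeg)
      rw [this, mul_zero]
  | succ d ih =>
    intro n f hhom hstab α
    by_cases hα : coeff α f = 0
    · rw [hα, mul_zero]
    -- setup
    set gP : (Fin n → ℝ) → MvPolynomial (Fin n) ℝ :=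
      fun v => ∑ j, C (v j) * pderiv j f with hgP
    set e : Fin n → ℝ := fun j => eval (fun _ => (1:ℝ)) (pderiv j f) with he
    have hEform : ∀ v : Fin n → ℝ, eval (fun _ => (1:ℝ)) (gP v) = ∑ j, v j * e j := by
      intro v
      rw [hgP, map_sum (eval _)]
      apply Finset.sum_congr rfl
      intro j _
      rw [eval_mul, eval_C]
    have hgPhom : ∀ v : Fin n → ℝ, (gP v).IsHomogeneous d := by
      intro v
      exact IsHomogeneous.sum _ _ _ (fun j _ => (pderiv_homogeneous hhom j).C_mul _)
    have hgPstab : ∀ v : Fin n → ℝ, (∀ k, 0 < v k) → RealStable (gP v) :=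
      fun v hv => dirderiv_stable hhom hstab hv
    have hEne : ∀ v : Fin n → ℝ, (∀ k, 0 < v k) → (∑ j, v j * e j) ≠ 0 := by
      intro v hv
      rw [← hEform v]
      exact pos_orthant_ne_zero (hgPhom v) (hgPstab v hv) (fun _ => one_pos)
    set E1 : ℝ := ∑ j, (1:ℝ) * e j with hE1
    have hE1ne : E1 ≠ 0 := hEne _ (fun _ => one_pos)
    -- sign constancy of v ↦ ∑ v j * e j on the positive orthant
    have hsign : ∀ v : Fin n → ℝ, (∀ k, 0 < v k) → 0 < (∑ j, v j * e j) * E1 := by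
      intro v hv
      rcases (hEne v hv).lt_or_gt with hB | hB <;>
        rcases hE1ne.lt_or_gt with hA | hA
      · nlinarith
      · -- B < 0 < A : contradiction via intermediate point
        exfalso
        set A : ℝ := E1
        set B : ℝ := ∑ j, v j * e j
        have hABne : A - B ≠ 0 := by nlinarith
        set t : ℝ := A / (A - B) with ht
        have ht0 : 0 < t := div_pos hA (by nlinarith)
        have ht1 : t < 1 := by
          rw [ht, div_lt_one (by nlinarith)]
          nlinarith
        have hw : ∀ k, 0 < (1 - t) * 1 + t * v k := by
          intro k
          have := hv k
          nlinarith
        have hEw : (∑ j, ((1 - t) * 1 + t * v j) * e j) = (1 - t) * A + t * B := by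
          rw [hE1, Finset.mul_sum, Finset.mul_sum, ← Finset.sum_add_distrib]
          apply Finset.sum_congr rfl
          intro j _
          ring
        have hzero : (1 - t) * A + t * B = 0 := by
          rw [ht]
          field_simp
          ring
        exact hEne _ hw (by rw [hEw, hzero])
      · -- A < 0 < B : contradiction via intermediate point
        exfalso
        set A : ℝ := E1
        set B : ℝ := ∑ j, v j * e j
        have hABne : A - B ≠ 0 := by nlinarith
        set t : ℝ := A / (A - B) with ht
        have ht0 : 0 < t := div_pos_of_neg_of_neg hA (by nlinarith)
        have ht1 : t < 1 := by
          rw [ht, div_lt_one_of_neg (by nlinarith)]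
          nlinarith
        have hw : ∀ k, 0 < (1 - t) * 1 + t * v k := by
          intro k
          have := hv k
          nlinarith
        have hEw : (∑ j, ((1 - t) * 1 + t * v j) * e j) = (1 - t) * A + t * B := by
          rw [hE1, Finset.mul_sum, Finset.mul_sum, ← Finset.sum_add_distrib]
          apply Finset.sum_congr rfl
          intro j _
          ring
        have hzero : (1 - t) * A + t * B = 0 := by
          rw [ht]
          field_simp
          ring
        exact hEne _ hw (by rw [hEw, hzero])
      · nlinarith
    -- coefficient formula for gP v
    have hcoefform : ∀ (v : Fin n → ℝ) (β : Fin n →₀ ℕ),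
        coeff β (gP v) = ∑ j, v j * (((β j : ℝ) + 1) * coeff (β + Finsupp.single j 1) f) := by
      intro v β
      rw [hgP, coeff_sum]
      apply Finset.sum_congr rfl
      intro j _
      rw [coeff_C_mul, coeff_pderiv]
    -- the limit argument: each individual coefficient has the right sign
    have hlimit : ∀ β : Fin n →₀ ℕ, ∀ j0 : Fin n,
        0 ≤ E1 * (((β j0 : ℝ) + 1) * coeff (β + Finsupp.single j0 1) f) := by
      intro β j0
      set b : Fin n → ℝ := fun j => E1 * (((β j : ℝ) + 1) * coeff (β + Finsupp.single j 1) f)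
        with hb
      -- for every positive v, ∑ v j * b j ≥ 0
      have hvb : ∀ v : Fin n → ℝ, (∀ k, 0 < v k) → 0 ≤ ∑ j, v j * b j := by
        intro v hv
        have hih := ih n (gP v) (hgPhom v) (hgPstab v hv) β
        rw [hEform v] at hih
        have h2 := hsign v hv
        have h3 : 0 ≤ E1 * coeff β (gP v) := sign_transfer hih h2
        rw [hcoefform] at h3
        rw [Finset.mul_sum] at h3
        calc (0:ℝ) ≤ ∑ j, E1 * (v j * (((β j : ℝ) + 1) * coeff (β + Finsupp.single j 1) f)) := h3
          _ = ∑ j, v j * b j := by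
              apply Finset.sum_congr rfl
              intro j _
              rw [hb]
              ring
      -- take v = (ε, …, ε) with 1 in position j0, let ε → 0⁺
      have hε : ∀ ε : ℝ, 0 < ε → ε ≤ 1 → 0 ≤ b j0 + ε * ∑ j ∈ Finset.univ \ {j0}, b j := by
        intro ε hε0 hε1
        have hv : ∀ k, 0 < (fun j => if j = j0 then 1 else ε) k := by
          intro k
          by_cases h : k = j0 <;> simp [h, hε0]
        have h1 := hvb _ hv
        have h2 : (∑ j, (if j = j0 then (1:ℝ) else ε) * b j)
            = b j0 + ε * ∑ j ∈ Finset.univ \ {j0}, b j := by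
          rw [Finset.sum_eq_sum_sdiff_singleton_add (Finset.mem_univ j0)
            (fun j => (if j = j0 then (1:ℝ) else ε) * b j), if_pos rfl, one_mul, add_comm,
            Finset.mul_sum]
          congr 1
          apply Finset.sum_congr rfl
          intro j hj
          rw [Finset.mem_sdiff, Finset.mem_singleton] at hj
          rw [if_neg hj.2]
        rw [h2] at h1
        exact h1
      -- conclude b j0 ≥ 0 by letting ε → 0⁺
      have : 0 ≤ b j0 := by
        set S : ℝ := ∑ j ∈ Finset.univ \ {j0}, b j with hS
        have htend : Filter.Tendsto (fun ε : ℝ => b j0 + ε * S) (nhdsWithin 0 (Set.Ioi 0))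
            (nhds (b j0)) := by
          have h1 : Filter.Tendsto (fun ε : ℝ => b j0 + ε * S) (nhds 0) (nhds (b j0 + 0 * S)) :=
            (continuous_const.add (continuous_id.mul continuous_const)).tendsto 0
          rw [zero_mul, add_zero] at h1
          exact h1.mono_left nhdsWithin_le_nhds
        apply ge_of_tendsto htend
        filter_upwards [self_mem_nhdsWithin,
          mem_nhdsWithin_of_mem_nhds (gt_mem_nhds (by norm_num : (0:ℝ) < 1))]
          with ε hε1 hε2
        exact hε ε hε1 (le_of_lt hε2)
      exact this
    -- every nonzero coefficient has the sign of E1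
    have hcoefsign : ∀ γ : Fin n →₀ ℕ, 0 ≤ E1 * coeff γ f := by
      intro γ
      by_cases hγ : coeff γ f = 0
      · rw [hγ, mul_zero]
      have hdeg := degree_coeff hhom hγ
      have hj : ∃ j, γ j ≠ 0 := by
        by_contra h
        push_neg at h
        simp only [h, Finset.sum_const_zero] at hdeg
        omega
      obtain ⟨j, hj⟩ := hj
      set β : Fin n →₀ ℕ := γ - Finsupp.single j 1 with hβ
      have hle : Finsupp.single j 1 ≤ γ := by
        rw [Finsupp.single_le_iff]
        omega
      have hrec : β + Finsupp.single j 1 = γ := tsub_add_cancel_of_le hle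
      have := hlimit β j
      rw [hrec] at this
      have hpos : (0:ℝ) < (β j : ℝ) + 1 := by positivity
      nlinarith
    -- transfer sign from E1 to eval 1 f
    have hf1ne : eval (fun _ => (1:ℝ)) f ≠ 0 :=
      pos_orthant_ne_zero hhom hstab (fun _ => one_pos)
    have hf1sum : eval (fun _ => (1:ℝ)) f = ∑ β ∈ f.support, coeff β f := by
      rw [eval_eq']
      apply Finset.sum_congr rfl
      intro β _
      simp
    have hEf1 : 0 ≤ E1 * eval (fun _ => (1:ℝ)) f := by
      rw [hf1sum, Finset.mul_sum]
      exact Finset.sum_nonneg (fun β _ => hcoefsign β)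
    have hEf1' : 0 < E1 * eval (fun _ => (1:ℝ)) f :=
      lt_of_le_of_ne hEf1 (Ne.symm (mul_ne_zero hE1ne hf1ne))
    exact sign_transfer (hcoefsign α) hEf1'

end Stmt16Aux

theorem stmt16 (n d : ℕ) (f : MvPolynomial (Fin n) ℝ)
    (hhom : f.IsHomogeneous d) (hstab : RealStable f) :
    (∀ α β, f.coeff α ≠ 0 → f.coeff β ≠ 0 → 0 < f.coeff α * f.coeff β) ∧
    ((∃ α, 0 < f.coeff α) → ∀ β, 0 ≤ f.coeff β) := by
  have hkey := Stmt16Aux.key d n f hhom hstab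
  have hf1ne : eval (fun _ => (1:ℝ)) f ≠ 0 :=
    Stmt16Aux.pos_orthant_ne_zero hhom hstab (fun _ => one_pos)
  set s : ℝ := eval (fun _ => (1:ℝ)) f with hs
  constructor
  · intro α β hα hβ
    have h1 : 0 < s * coeff α f := lt_of_le_of_ne (hkey α) (Ne.symm (mul_ne_zero hf1ne hα))
    have h2 : 0 < s * coeff β f := lt_of_le_of_ne (hkey β) (Ne.symm (mul_ne_zero hf1ne hβ))
    nlinarith [mul_pos h1 h2, sq_nonneg s]
  · rintro ⟨α, hα⟩ β
    have h1 : 0 < s * coeff α f := lt_of_le_of_ne (hkey α)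
      (Ne.symm (mul_ne_zero hf1ne (ne_of_gt hα)))
    have hspos : 0 < s := by nlinarith
    have h2 := hkey β
    nlinarith
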